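/- Let G be a finite abelian group with unitary Fourier transform f̂(χ) = |G|^{-1/2} ∑_{x∈G} f(x) conj(χ(x)). Let S ⊆ G, Σ ⊆ Ĝ, and suppose |S|·|Σ| < |G|. Then for every f : G → ℂ, ‖f‖_{ℓ²(G)} ≤ (1 − (|S||Σ|/|G|)^{1/2})^{-1} (‖f‖_{ℓ²(G∖S)} + ‖f̂‖_{ℓ²(Ĝ∖Σ)}). In particular (S,Σ) is a strong annihilating pair. -/

import Mathlib

open Finset ComplexConjugate

/-- ℓ²-norm of `f` over the finite set `T`. -/
noncomputable def l2norm {α : Type*} (T : Finset α) (f : α → ℂ) : ℝ :=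
  Real.sqrt (∑ x ∈ T, ‖f x‖ ^ 2)

/-- ℓ^p-norm (p a real exponent) of `f` over the finite set `T`. -/
noncomputable def lpnorm {α : Type*} (p : ℝ) (T : Finset α) (f : α → ℂ) : ℝ :=
  (∑ x ∈ T, ‖f x‖ ^ p) ^ (1 / p)

/-- The unitary Fourier transform on a finite abelian group:
`f̂(χ) = |G|^{-1/2} ∑_x f x * conj (χ x)`. -/
noncomputable def dft {G : Type*} [AddCommGroup G] [Fintype G]
    (f : G → ℂ) (χ : AddChar G ℂ) : ℂ :=
  (Real.sqrt (Fintype.card G) : ℂ)⁻¹ * ∑ x, f x * conj (χ x)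

section Aux

lemma l2norm_nonneg' {α : Type*} (T : Finset α) (f : α → ℂ) : 0 ≤ l2norm T f :=
  Real.sqrt_nonneg _

lemma l2norm_eq_norm {α : Type*} (T : Finset α) (f : α → ℂ) :
    l2norm T f = ‖(EuclideanSpace.equiv T ℂ).symm (fun x : T => f x)‖ := by
  rw [l2norm, EuclideanSpace.norm_eq]
  congr 1
  exact (Finset.sum_coe_sort T fun x => ‖f x‖ ^ 2).symm

lemma l2norm_add_le {α : Type*} (T : Finset α) (f g : α → ℂ) :
    l2norm T (fun x => f x + g x) ≤ l2norm T f + l2norm T g := by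
  rw [l2norm_eq_norm, l2norm_eq_norm, l2norm_eq_norm]
  have h : (EuclideanSpace.equiv T ℂ).symm (fun x : T => f x + g x)
      = (EuclideanSpace.equiv T ℂ).symm (fun x : T => f x)
        + (EuclideanSpace.equiv T ℂ).symm (fun x : T => g x) := by
    rw [← map_add]
    rfl
  rw [h]
  exact norm_add_le _ _

lemma l2norm_le_univ {α : Type*} [Fintype α] (T : Finset α) (f : α → ℂ) :
    l2norm T f ≤ l2norm Finset.univ f :=
  Real.sqrt_le_sqrt (Finset.sum_le_sum_of_subset_of_nonneg (Finset.subset_univ T)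
    (fun _ _ _ => by positivity))

lemma sqrt_add_le' (a b : ℝ) (ha : 0 ≤ a) (hb : 0 ≤ b) :
    Real.sqrt (a + b) ≤ Real.sqrt a + Real.sqrt b := by
  have h : a + b ≤ (Real.sqrt a + Real.sqrt b) ^ 2 := by
    rw [add_sq]
    nlinarith [Real.sq_sqrt ha, Real.sq_sqrt hb, Real.sqrt_nonneg a, Real.sqrt_nonneg b]
  calc Real.sqrt (a + b) ≤ Real.sqrt ((Real.sqrt a + Real.sqrt b) ^ 2) := Real.sqrt_le_sqrt h
    _ = Real.sqrt a + Real.sqrt b := Real.sqrt_sq (by positivity)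

lemma l2norm_univ_le_split {α : Type*} [Fintype α] [DecidableEq α] (T : Finset α) (f : α → ℂ) :
    l2norm Finset.univ f ≤ l2norm T f + l2norm Tᶜ f := by
  unfold l2norm
  rw [← Finset.sum_add_sum_compl T fun x => ‖f x‖ ^ 2]
  exact sqrt_add_le' _ _ (by positivity) (by positivity)

variable {G : Type} [AddCommGroup G] [Fintype G] [DecidableEq G]

lemma char_orth1 (x y : G) :
    ∑ χ : AddChar G ℂ, χ x * conj (χ y) = if x = y then (Fintype.card G : ℂ) else 0 := by
  have h : ∀ χ : AddChar G ℂ, χ x * conj (χ y) = χ (x - y) := by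
    intro χ
    rw [← AddChar.map_neg_eq_conj, ← AddChar.map_add_eq_mul, sub_eq_add_neg]
  simp_rw [h, AddChar.sum_apply_eq_ite, sub_eq_zero]

omit [DecidableEq G] in
lemma char_orth2 (χ χ' : AddChar G ℂ) :
    ∑ x : G, χ x * conj (χ' x) = if χ = χ' then (Fintype.card G : ℂ) else 0 := by
  have h : ∀ x : G, χ x * conj (χ' x) = (χ * χ'⁻¹) x := by
    intro x
    rw [AddChar.mul_apply, AddChar.inv_apply, AddChar.map_neg_eq_conj]
  simp_rw [h, AddChar.sum_eq_ite]
  congr 1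
  rw [eq_iff_iff]
  constructor
  · intro hh
    exact mul_inv_eq_one.mp hh
  · intro hh; subst hh
    exact mul_inv_cancel χ

omit [AddCommGroup G] [DecidableEq G] in
lemma sqrtn_sq :
    ((Real.sqrt (Fintype.card G) : ℂ))⁻¹ * ((Real.sqrt (Fintype.card G) : ℂ))⁻¹
      = ((Fintype.card G : ℂ))⁻¹ := by
  rw [← mul_inv]
  congr 1
  rw [← Complex.ofReal_mul, Real.mul_self_sqrt (Nat.cast_nonneg _)]
  push_cast
  ring

lemma plancherelC (f : G → ℂ) :
    ∑ χ : AddChar G ℂ, dft f χ * conj (dft f χ) = ∑ x, f x * conj (f x) := by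
  have hnC : (Fintype.card G : ℂ) ≠ 0 := Nat.cast_ne_zero.mpr Fintype.card_ne_zero
  have key : ∀ χ : AddChar G ℂ, dft f χ * conj (dft f χ)
      = (Fintype.card G : ℂ)⁻¹ *
        ∑ x, ∑ y, (f x * conj (f y)) * (χ y * conj (χ x)) := by
    intro χ
    rw [dft, map_mul, map_inv₀, Complex.conj_ofReal, map_sum, mul_mul_mul_comm, sqrtn_sq]
    congr 1
    rw [Finset.sum_mul_sum]
    refine Finset.sum_congr rfl fun x _ => Finset.sum_congr rfl fun y _ => ?_
    rw [map_mul, Complex.conj_conj]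
    ring
  calc ∑ χ : AddChar G ℂ, dft f χ * conj (dft f χ)
      = (Fintype.card G : ℂ)⁻¹ *
        ∑ χ : AddChar G ℂ, ∑ x, ∑ y, (f x * conj (f y)) * (χ y * conj (χ x)) := by
        rw [Finset.mul_sum]
        exact Finset.sum_congr rfl fun χ _ => key χ
    _ = (Fintype.card G : ℂ)⁻¹ *
        ∑ x, ∑ y, (f x * conj (f y)) * ∑ χ : AddChar G ℂ, χ y * conj (χ x) := by
        congr 1
        rw [Finset.sum_comm]
        refine Finset.sum_congr rfl fun x _ => ?_
        rw [Finset.sum_comm]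
        refine Finset.sum_congr rfl fun y _ => ?_
        rw [Finset.mul_sum]
    _ = ∑ x, f x * conj (f x) := by
        simp_rw [char_orth1, mul_ite, mul_zero, Finset.sum_ite_eq', Finset.mem_univ, if_true]
        rw [← Finset.sum_mul]
        field_simp

omit [DecidableEq G] in
lemma normSq_eq_norm_sq (z : ℂ) : Complex.normSq z = ‖z‖ ^ 2 := by
  rw [Complex.normSq_eq_norm_sq]

lemma plancherel (f : G → ℂ) :
    ∑ χ : AddChar G ℂ, ‖dft f χ‖ ^ 2 = ∑ x, ‖f x‖ ^ 2 := by
  have h := plancherelC f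
  simp_rw [Complex.mul_conj] at h
  simp_rw [← normSq_eq_norm_sq]
  exact_mod_cast h

omit [DecidableEq G] in
lemma dft_sub (f g : G → ℂ) (χ : AddChar G ℂ) :
    dft (fun x => f x - g x) χ = dft f χ - dft g χ := by
  unfold dft
  rw [← mul_sub, ← Finset.sum_sub_distrib]
  congr 1
  refine Finset.sum_congr rfl fun x _ => ?_
  ring

end Aux

/-- Quantitative Matolcsi–Szücs / Donoho–Stark uncertainty principle:
if `|S| |Σ| < |G|` then `(S,Σ)` is a strong annihilating pair with constant
`(1 - (|S||Σ|/|G|)^{1/2})⁻¹`. -/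
theorem stmt1 {G : Type} [AddCommGroup G] [Fintype G] [DecidableEq G]
    (S : Finset G) (Sig : Finset (AddChar G ℂ))
    (hsmall : S.card * Sig.card < Fintype.card G) :
    ∀ f : G → ℂ,
      l2norm Finset.univ f ≤
        (1 - Real.sqrt ((S.card * Sig.card : ℝ) / (Fintype.card G : ℝ)))⁻¹ *
          (l2norm Sᶜ f + l2norm Sigᶜ (dft f)) := by
  intro f
  set n := Fintype.card G with hn
  have hnpos : (0 : ℝ) < n := by
    have : 0 < n := Fintype.card_pos
    exact_mod_cast this
  set c : ℝ := Real.sqrt ((S.card * Sig.card : ℝ) / (n : ℝ)) with hcdef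
  have hc1 : c < 1 := by
    rw [hcdef, show (1:ℝ) = Real.sqrt 1 by simp]
    apply Real.sqrt_lt_sqrt (by positivity)
    rw [div_lt_one hnpos]
    exact_mod_cast hsmall
  have hcpos : (0:ℝ) < 1 - c := by linarith
  have hc0 : 0 ≤ c := Real.sqrt_nonneg _
  -- the band-limited approximation g
  set g : G → ℂ := fun x => (Real.sqrt n : ℂ)⁻¹ * ∑ χ ∈ Sig, dft f χ * χ x with hg
  have hdftg : ∀ χ' : AddChar G ℂ, dft g χ' = if χ' ∈ Sig then dft f χ' else 0 := by
    intro χ'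
    have hnC : (n : ℂ) ≠ 0 := by exact_mod_cast hnpos.ne'
    calc dft g χ'
        = (Real.sqrt n : ℂ)⁻¹ * ((Real.sqrt n : ℂ)⁻¹ *
            ∑ x, (∑ χ ∈ Sig, dft f χ * χ x) * conj (χ' x)) := by
          rw [dft]
          congr 1
          rw [Finset.mul_sum]
          exact Finset.sum_congr rfl fun x _ => by ring
      _ = (n : ℂ)⁻¹ * ∑ χ ∈ Sig, dft f χ * ∑ x, χ x * conj (χ' x) := by
          rw [← mul_assoc]
          rw [show ((Real.sqrt n : ℂ))⁻¹ * ((Real.sqrt n : ℂ))⁻¹ = ((n : ℂ))⁻¹ from sqrtn_sq]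
          congr 1
          calc ∑ x, (∑ χ ∈ Sig, dft f χ * χ x) * conj (χ' x)
              = ∑ x, ∑ χ ∈ Sig, dft f χ * (χ x * conj (χ' x)) := by
                refine Finset.sum_congr rfl fun x _ => ?_
                rw [Finset.sum_mul]
                exact Finset.sum_congr rfl fun χ _ => by ring
            _ = ∑ χ ∈ Sig, ∑ x, dft f χ * (χ x * conj (χ' x)) := Finset.sum_comm
            _ = ∑ χ ∈ Sig, dft f χ * ∑ x, χ x * conj (χ' x) := by
                refine Finset.sum_congr rfl fun χ _ => ?_
                rw [Finset.mul_sum]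
      _ = if χ' ∈ Sig then dft f χ' else 0 := by
          simp_rw [char_orth2, mul_ite, mul_zero, Finset.sum_ite_eq']
          split_ifs with h
          · field_simp
            try ring
          · simp
  -- h := f - g has Fourier transform supported off Sig
  set h : G → ℂ := fun x => f x - g x with hh
  have hdfth : ∀ χ : AddChar G ℂ, dft h χ = if χ ∈ Sig then 0 else dft f χ := by
    intro χ
    rw [hh, dft_sub, hdftg]
    split_ifs <;> simp
  -- ℓ² norm of h equals tail of the Fourier transform of f
  have hnormh : l2norm Finset.univ h = l2norm Sigᶜ (dft f) := by
    unfold l2norm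
    congr 1
    rw [← plancherel h]
    rw [← Finset.sum_add_sum_compl Sig fun χ => ‖dft h χ‖ ^ 2]
    have h1 : ∑ χ ∈ Sig, ‖dft h χ‖ ^ 2 = 0 := by
      apply Finset.sum_eq_zero
      intro χ hχ
      rw [hdfth, if_pos hχ]
      simp
    have h2 : ∑ χ ∈ Sigᶜ, ‖dft h χ‖ ^ 2 = ∑ χ ∈ Sigᶜ, ‖dft f χ‖ ^ 2 := by
      refine Finset.sum_congr rfl fun χ hχ => ?_
      rw [hdfth, if_neg (Finset.mem_compl.mp hχ)]
    rw [h1, h2, zero_add]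
  -- Plancherel for f
  have hPf : l2norm Finset.univ (dft f) = l2norm Finset.univ f := by
    unfold l2norm
    rw [plancherel f]
  -- pointwise bound on g
  have hgpt : ∀ x : G, ‖g x‖ ≤ (Real.sqrt n)⁻¹ * (Real.sqrt Sig.card *
      l2norm Finset.univ (dft f)) := by
    intro x
    have h1 : ‖g x‖ ≤ (Real.sqrt n)⁻¹ * ∑ χ ∈ Sig, ‖dft f χ‖ := by
      rw [hg]
      simp only
      rw [norm_mul]
      have e1 : ‖((Real.sqrt n : ℝ) : ℂ)⁻¹‖ = (Real.sqrt n)⁻¹ := by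
        rw [norm_inv, Complex.norm_real, Real.norm_eq_abs,
          abs_of_nonneg (Real.sqrt_nonneg _)]
      rw [e1]
      gcongr
      calc ‖∑ χ ∈ Sig, dft f χ * χ x‖ ≤ ∑ χ ∈ Sig, ‖dft f χ * χ x‖ := norm_sum_le _ _
        _ = ∑ χ ∈ Sig, ‖dft f χ‖ := by
            refine Finset.sum_congr rfl fun χ _ => ?_
            rw [norm_mul, AddChar.norm_apply, mul_one]
    have h2 : ∑ χ ∈ Sig, ‖dft f χ‖ ≤ Real.sqrt Sig.card * l2norm Finset.univ (dft f) := by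
      have hcs := Finset.sum_mul_sq_le_sq_mul_sq Sig (fun _ => (1:ℝ)) (fun χ => ‖dft f χ‖)
      simp only [one_mul, one_pow, Finset.sum_const, nsmul_eq_mul, mul_one] at hcs
      have hsub : ∑ χ ∈ Sig, ‖dft f χ‖ ^ 2 ≤ ∑ χ : AddChar G ℂ, ‖dft f χ‖ ^ 2 :=
        Finset.sum_le_sum_of_subset_of_nonneg (Finset.subset_univ Sig)
          fun _ _ _ => by positivity
      have hle : (∑ χ ∈ Sig, ‖dft f χ‖) ^ 2 ≤
          Sig.card * ∑ χ : AddChar G ℂ, ‖dft f χ‖ ^ 2 :=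
        hcs.trans (mul_le_mul_of_nonneg_left hsub (Nat.cast_nonneg _))
      have hs := Real.sqrt_le_sqrt hle
      rw [Real.sqrt_sq (Finset.sum_nonneg fun _ _ => norm_nonneg _),
        Real.sqrt_mul (Nat.cast_nonneg _)] at hs
      exact hs
    calc ‖g x‖ ≤ (Real.sqrt n)⁻¹ * ∑ χ ∈ Sig, ‖dft f χ‖ := h1
      _ ≤ _ := mul_le_mul_of_nonneg_left h2 (by positivity)
  -- l2 norm of g on S
  have hgS : l2norm S g ≤ c * l2norm Finset.univ f := by
    have hB : 0 ≤ (Real.sqrt n)⁻¹ * (Real.sqrt Sig.card * l2norm Finset.univ (dft f)) := by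
      have := l2norm_nonneg' (Finset.univ) (dft f)
      positivity
    have h1 : ∑ x ∈ S, ‖g x‖ ^ 2 ≤ S.card *
        ((Real.sqrt n)⁻¹ * (Real.sqrt Sig.card * l2norm Finset.univ (dft f))) ^ 2 := by
      calc ∑ x ∈ S, ‖g x‖ ^ 2
          ≤ ∑ _x ∈ S, ((Real.sqrt n)⁻¹ * (Real.sqrt Sig.card * l2norm Finset.univ (dft f))) ^ 2 := by
            refine Finset.sum_le_sum fun x _ => ?_
            exact pow_le_pow_left₀ (norm_nonneg _) (hgpt x) 2
        _ = _ := by rw [Finset.sum_const, nsmul_eq_mul]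
    have h2 : l2norm S g ≤ Real.sqrt (S.card *
        ((Real.sqrt n)⁻¹ * (Real.sqrt Sig.card * l2norm Finset.univ (dft f))) ^ 2) :=
      Real.sqrt_le_sqrt h1
    rw [Real.sqrt_mul (Nat.cast_nonneg _), Real.sqrt_sq hB] at h2
    refine h2.trans_eq ?_
    rw [hPf, hcdef, Real.sqrt_div (by positivity), Real.sqrt_mul (by positivity),
      div_eq_mul_inv]
    ring
  -- put everything together
  have step1 : l2norm Finset.univ f ≤ l2norm S f + l2norm Sᶜ f := by
    have := l2norm_univ_le_split S f
    linarith
  have step2 : l2norm S f ≤ l2norm S g + l2norm S h := by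
    have heq : l2norm S f = l2norm S (fun x => g x + h x) := by
      congr 1
      funext x
      simp [hh]
    rw [heq]
    exact l2norm_add_le S g h
  have step3 : l2norm S h ≤ l2norm Sigᶜ (dft f) := by
    rw [← hnormh]
    exact l2norm_le_univ S h
  have key : l2norm Finset.univ f ≤
      l2norm Sᶜ f + c * l2norm Finset.univ f + l2norm Sigᶜ (dft f) := by
    linarith [step1, step2, step3, hgS]
  rw [inv_mul_eq_div, le_div_iff₀ hcpos]
  have hring : l2norm Finset.univ f * (1 - c)
      = l2norm Finset.univ f - c * l2norm Finset.univ f := by ring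
  linarith [key]
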